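/- Every infinite-dimensional closed *-subalgebra E of s is isomorphic, as a topological *-algebra (i.e. via a bijective ℂ-algebra homomorphism preserving complex conjugation which is a homeomorphism), to the Köthe algebra λ^∞(n_k^q) := {ξ ∈ ℂ^ℕ : sup_{k∈ℕ} |ξ_k| n_k^q < ∞ for all q ∈ ℕ₀} for some strictly increasing sequence (n_k)_{k∈ℕ} of natural numbers. -/

import Mathlib

noncomputable section

/-- Membership in the space `s` of rapidly decreasing sequences (the paper's index
`j ∈ {1,2,...}` corresponds to `j+1` here). -/
def inS (ξ : ℕ → ℂ) : Prop :=
  ∀ q : ℕ, Summable fun j : ℕ => ‖ξ j‖ ^ 2 * ((j : ℝ) + 1) ^ (2 * q)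

/-- The `q`-th norm `|ξ|_q` on `s`. -/
def sNorm (q : ℕ) (ξ : ℕ → ℂ) : ℝ :=
  Real.sqrt (∑' j : ℕ, ‖ξ j‖ ^ 2 * ((j : ℝ) + 1) ^ (2 * q))

/-- The Köthe algebra `λ^∞(n_k^q)` for a sequence `(n_k)` of positive integers. -/
def lambdaN (n : ℕ → ℕ) : Set (ℕ → ℂ) :=
  {ξ | ∀ q : ℕ, ∃ C : ℝ, ∀ k : ℕ, ‖ξ k‖ * (n k : ℝ) ^ q ≤ C}

/-- The `q`-th norm `ξ ↦ sup_k |ξ_k| n_k^q` on `λ^∞(n_k^q)`. -/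
def kNorm (n : ℕ → ℕ) (q : ℕ) (ξ : ℕ → ℂ) : ℝ :=
  ⨆ k : ℕ, ‖ξ k‖ * (n k : ℝ) ^ q

namespace Stmt7

lemma term_nonneg (ξ : ℕ → ℂ) (q j : ℕ) : 0 ≤ ‖ξ j‖ ^ 2 * ((j : ℝ) + 1) ^ (2 * q) := by
  positivity

lemma finite_ge {ξ : ℕ → ℂ} (h : inS ξ) {δ : ℝ} (hδ : 0 < δ) :
    {j : ℕ | δ ≤ ‖ξ j‖}.Finite := by
  have hs : Summable fun j : ℕ => ‖ξ j‖ ^ 2 * ((j : ℝ) + 1) ^ (2 * 0) := h 0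
  simp only [Nat.mul_zero, pow_zero, mul_one] at hs
  have ht := hs.tendsto_cofinite_zero
  have hev : ∀ᶠ j in Filter.cofinite, ‖ξ j‖ ^ 2 < δ ^ 2 :=
    ht.eventually_lt_const (by positivity)
  rw [Filter.eventually_cofinite] at hev
  refine hev.subset ?_
  intro j hj
  simp only [Set.mem_setOf_eq, not_lt] at *
  nlinarith [norm_nonneg (ξ j)]

lemma inS_finsupp {ξ : ℕ → ℂ} (h : {j | ξ j ≠ 0}.Finite) : inS ξ := by
  intro q
  refine summable_of_ne_finset_zero (s := h.toFinset) ?_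
  intro j hj
  simp only [Set.Finite.mem_toFinset, Set.mem_setOf_eq, not_not] at hj
  simp [hj]

lemma sNorm_nonneg (q : ℕ) (ξ : ℕ → ℂ) : 0 ≤ sNorm q ξ := Real.sqrt_nonneg _

lemma summable_term {ξ η : ℕ → ℂ} (hη : inS η) {c : ℝ} (hc : 0 ≤ c)
    (h : ∀ j, ‖ξ j‖ ≤ c * ‖η j‖) (q : ℕ) :
    Summable fun j : ℕ => ‖ξ j‖ ^ 2 * ((j : ℝ) + 1) ^ (2 * q) := by
  refine Summable.of_nonneg_of_le (term_nonneg ξ q) (fun j => ?_) ((hη q).mul_left (c ^ 2))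
  have h1 : ‖ξ j‖ ^ 2 ≤ (c * ‖η j‖) ^ 2 := pow_le_pow_left₀ (norm_nonneg _) (h j) 2
  have h2 : (0:ℝ) ≤ ((j : ℝ) + 1) ^ (2 * q) := by positivity
  nlinarith

lemma inS_of_le {ξ η : ℕ → ℂ} (hη : inS η) {c : ℝ} (hc : 0 ≤ c)
    (h : ∀ j, ‖ξ j‖ ≤ c * ‖η j‖) : inS ξ := fun q => summable_term hη hc h q

lemma sNorm_le_of_le {ξ η : ℕ → ℂ} (hη : inS η) {c : ℝ} (hc : 0 ≤ c)
    (h : ∀ j, ‖ξ j‖ ≤ c * ‖η j‖) (q : ℕ) : sNorm q ξ ≤ c * sNorm q η := by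
  have hsξ := summable_term hη hc h q
  have hle : (∑' j : ℕ, ‖ξ j‖ ^ 2 * ((j : ℝ) + 1) ^ (2 * q)) ≤
      c ^ 2 * ∑' j : ℕ, ‖η j‖ ^ 2 * ((j : ℝ) + 1) ^ (2 * q) := by
    rw [← tsum_mul_left]
    refine Summable.tsum_le_tsum (fun j => ?_) hsξ ((hη q).mul_left _)
    have h1 : ‖ξ j‖ ^ 2 ≤ (c * ‖η j‖) ^ 2 := pow_le_pow_left₀ (norm_nonneg _) (h j) 2
    have h2 : (0:ℝ) ≤ ((j : ℝ) + 1) ^ (2 * q) := by positivity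
    nlinarith
  calc sNorm q ξ ≤ Real.sqrt (c ^ 2 * ∑' j : ℕ, ‖η j‖ ^ 2 * ((j : ℝ) + 1) ^ (2 * q)) :=
        Real.sqrt_le_sqrt hle
    _ = c * sNorm q η := by
        rw [Real.sqrt_mul (sq_nonneg c), Real.sqrt_sq hc]; rfl

lemma le_sNorm {ξ : ℕ → ℂ} (h : inS ξ) (q j : ℕ) :
    ‖ξ j‖ * ((j : ℝ) + 1) ^ q ≤ sNorm q ξ := by
  have hkey : (‖ξ j‖ * ((j : ℝ) + 1) ^ q) ^ 2 = ‖ξ j‖ ^ 2 * ((j : ℝ) + 1) ^ (2 * q) := by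
    rw [mul_pow, ← pow_mul, Nat.mul_comm q 2]
  have hle : ‖ξ j‖ ^ 2 * ((j : ℝ) + 1) ^ (2 * q) ≤
      ∑' i : ℕ, ‖ξ i‖ ^ 2 * ((i : ℝ) + 1) ^ (2 * q) :=
    Summable.le_tsum (h q) j (fun i _ => term_nonneg ξ q i)
  rw [sNorm, Real.le_sqrt (by positivity) (tsum_nonneg (term_nonneg ξ q))]
  rw [hkey]; exact hle

end Stmt7

section PartTwo
open Classical
namespace Stmt7

structure Good (E : Set (ℕ → ℂ)) : Prop where
  isS : ∀ ξ ∈ E, inS ξ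
  add_mem : ∀ ξ ∈ E, ∀ η ∈ E, ξ + η ∈ E
  smul_mem : ∀ (c : ℂ), ∀ ξ ∈ E, c • ξ ∈ E
  mul_mem : ∀ ξ ∈ E, ∀ η ∈ E, ξ * η ∈ E
  star_mem : ∀ ξ ∈ E, star ξ ∈ E
  closed_mem : ∀ ξ : ℕ → ℂ, inS ξ →
      (∀ q : ℕ, ∀ ε : ℝ, 0 < ε → ∃ η ∈ E, sNorm q (ξ - η) < ε) → ξ ∈ E

variable {E : Set (ℕ → ℂ)}

lemma Good.sub (hE : Good E) {ξ η : ℕ → ℂ} (hξ : ξ ∈ E) (hη : η ∈ E) : ξ - η ∈ E := by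
  have h : ξ - η = ξ + (-1 : ℂ) • η := by funext j; simp [sub_eq_add_neg]
  rw [h]; exact hE.add_mem _ hξ _ (hE.smul_mem _ _ hη)

lemma norm_real_coe {x : ℝ} (hx : 0 ≤ x) : ‖(x : ℂ)‖ = x := by
  rw [Complex.norm_real, Real.norm_eq_abs, abs_of_nonneg hx]

/-- The indicator of the set where a nonneg real element attains its maximum `t` is in `E`. -/
lemma Good.maxLevel (hE : Good E) {r : ℕ → ℝ} (hr0 : ∀ j, 0 ≤ r j)
    (hmem : (fun j => (r j : ℂ)) ∈ E) {t : ℝ} (ht : 0 < t)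
    (hle : ∀ j, r j ≤ t) :
    (fun j => if r j = t then (1 : ℂ) else 0) ∈ E := by
  set ζ : ℕ → ℂ := fun j => (r j : ℂ) with hζ
  have hζS : inS ζ := hE.isS _ hmem
  have hnorm : ∀ j, ‖ζ j‖ = r j := fun j => norm_real_coe (hr0 j)
  have hF : {j : ℕ | t / 2 ≤ ‖ζ j‖}.Finite := finite_ge hζS (by linarith)
  -- a uniform gap below the max
  obtain ⟨ρ, hρ0, hρ1, hρ⟩ : ∃ ρ : ℝ, 0 ≤ ρ ∧ ρ < 1 ∧ ∀ j, r j ≠ t → r j ≤ ρ * t := by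
    set F : Finset ℕ := hF.toFinset.filter (fun j => r j ≠ t) with hFdef
    by_cases hne : F.Nonempty
    · refine ⟨max (1/2) (F.sup' hne fun j => r j / t), le_trans (by norm_num) (le_max_left _ _),
        ?_, ?_⟩
      · refine max_lt (by norm_num) ?_
        rw [Finset.sup'_lt_iff]
        intro j hj
        have hjt : r j ≠ t := (Finset.mem_filter.mp hj).2
        exact div_lt_one ht |>.mpr (lt_of_le_of_ne (hle j) hjt)
      · intro j hjt
        by_cases hbig : t / 2 ≤ r j
        · have hjF : j ∈ F := by
            rw [hFdef, Finset.mem_filter, Set.Finite.mem_toFinset]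
            have hb2 : t / 2 ≤ ‖ζ j‖ := by rw [hnorm j]; exact hbig
            exact ⟨hb2, hjt⟩
          have h1 : r j / t ≤ F.sup' hne fun j => r j / t :=
            Finset.le_sup' (fun j => r j / t) hjF
          have h2 : r j / t ≤ max (1/2) (F.sup' hne fun j => r j / t) :=
            le_trans h1 (le_max_right _ _)
          calc r j = (r j / t) * t := by field_simp
            _ ≤ _ := by apply mul_le_mul_of_nonneg_right h2 ht.le
        · push_neg at hbig
          have : r j ≤ (1/2) * t := by linarith
          calc r j ≤ (1/2) * t := this
            _ ≤ _ := mul_le_mul_of_nonneg_right (le_max_left _ _) ht.le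
    · refine ⟨1/2, by norm_num, by norm_num, fun j hjt => ?_⟩
      by_contra hcon
      push_neg at hcon
      exact hne ⟨j, by
        rw [hFdef, Finset.mem_filter, Set.Finite.mem_toFinset]
        constructor
        · show t / 2 ≤ ‖ζ j‖
          rw [hnorm j]; nlinarith
        · exact hjt⟩
  -- the normalized base element and its powers
  have hbase : (fun j => ((r j / t : ℝ) : ℂ)) ∈ E := by
    have h : (fun j => ((r j / t : ℝ) : ℂ)) = ((t : ℂ)⁻¹) • ζ := by
      funext j
      simp only [Pi.smul_apply, smul_eq_mul, hζ]
      push_cast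
      field_simp
    rw [h]; exact hE.smul_mem _ _ hmem
  have hpow : ∀ m : ℕ, (fun j => ((r j / t : ℝ) : ℂ) ^ (m + 1)) ∈ E := by
    intro m
    induction m with
    | zero => simpa using hbase
    | succ m ih =>
        have h : (fun j => ((r j / t : ℝ) : ℂ) ^ (m + 2)) =
            (fun j => ((r j / t : ℝ) : ℂ) ^ (m + 1)) * (fun j => ((r j / t : ℝ) : ℂ)) := by
          funext j; simp [Pi.mul_apply]; ring
        rw [h]; exact hE.mul_mem _ ih _ hbase
  -- the indicator is rapidly decreasing
  set ind : ℕ → ℂ := fun j => if r j = t then (1 : ℂ) else 0 with hind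
  have hindS : inS ind := by
    apply inS_finsupp
    refine (hF.subset ?_)
    intro j hj
    simp only [Set.mem_setOf_eq, hind] at hj ⊢
    by_cases h : r j = t
    · rw [hnorm j, h]; linarith
    · simp [h] at hj
  -- base norms
  have hbaseS : inS (fun j => ((r j / t : ℝ) : ℂ)) := hE.isS _ hbase
  have hbasenorm : ∀ j, ‖((r j / t : ℝ) : ℂ)‖ = r j / t := fun j =>
    norm_real_coe (div_nonneg (hr0 j) ht.le)
  refine hE.closed_mem ind hindS ?_
  intro q ε hε
  set S : ℝ := sNorm q (fun j => ((r j / t : ℝ) : ℂ)) with hS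
  have hS0 : 0 ≤ S := sNorm_nonneg _ _
  obtain ⟨m, hm⟩ : ∃ m : ℕ, ρ ^ m < ε / (S + 1) := by
    have := (tendsto_pow_atTop_nhds_zero_of_lt_one hρ0 hρ1).eventually_lt_const
      (show (0:ℝ) < ε / (S + 1) by positivity)
    exact this.exists
  refine ⟨(fun j => ((r j / t : ℝ) : ℂ) ^ (m + 1)), hpow m, ?_⟩
  have hbound : ∀ j, ‖(ind - fun j => ((r j / t : ℝ) : ℂ) ^ (m + 1)) j‖ ≤
      ρ ^ m * ‖((r j / t : ℝ) : ℂ)‖ := by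
    intro j
    simp only [Pi.sub_apply, hind]
    by_cases h : r j = t
    · have hone : r j / t = 1 := by rw [h]; exact div_self ht.ne'
      rw [if_pos h, hone]
      simp only [Complex.ofReal_one, one_pow, sub_self, norm_zero]
      positivity
    · simp only [if_neg h]
      rw [hbasenorm j, zero_sub, norm_neg, norm_pow, hbasenorm j]
      have h1 : 0 ≤ r j / t := div_nonneg (hr0 j) ht.le
      have h2 : r j / t ≤ ρ := by
        rw [div_le_iff₀ ht]; exact hρ j h
      calc (r j / t) ^ (m + 1) = (r j / t) ^ m * (r j / t) := by ring
        _ ≤ ρ ^ m * (r j / t) := by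
            apply mul_le_mul_of_nonneg_right (pow_le_pow_left₀ h1 h2 m) h1
  have hest := sNorm_le_of_le hbaseS (by positivity : (0:ℝ) ≤ ρ ^ m) hbound q
  calc sNorm q (ind - fun j => ((r j / t : ℝ) : ℂ) ^ (m + 1)) ≤ ρ ^ m * S := hest
    _ < ε := by
        have h1 : ρ ^ m * (S + 1) < ε := by
          rw [← lt_div_iff₀ (by positivity : (0:ℝ) < S + 1)]
          exact hm
        nlinarith [pow_nonneg hρ0 m]

end Stmt7
end PartTwo
section PartThree
open Classical
namespace Stmt7
variable {E : Set (ℕ → ℂ)}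

lemma Good.levelNonnegAux (hE : Good E) : ∀ N : ℕ, ∀ r : ℕ → ℝ, (∀ j, 0 ≤ r j) →
    (fun j => (r j : ℂ)) ∈ E → ∀ t : ℝ, 0 < t →
    ∀ F : Finset ℕ, {j | t < r j} ⊆ ↑F → F.card ≤ N →
    (fun j => if r j = t then (1 : ℂ) else 0) ∈ E := by
  intro N
  induction N with
  | zero =>
      intro r hr0 hmem t ht F hsub hcard
      have hF : F = ∅ := Finset.card_eq_zero.mp (Nat.le_zero.mp hcard)
      refine hE.maxLevel hr0 hmem ht fun j => ?_
      by_contra hcon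
      push_neg at hcon
      have : j ∈ (F : Set ℕ) := hsub hcon
      simp [hF] at this
  | succ N ih =>
      intro r hr0 hmem t ht F hsub hcard
      by_cases hmax : ∀ j, r j ≤ t
      · exact hE.maxLevel hr0 hmem ht hmax
      push_neg at hmax
      obtain ⟨j₀, hj₀⟩ := hmax
      have hnorm : ∀ j, ‖(r j : ℂ)‖ = r j := fun j => norm_real_coe (hr0 j)
      have hS : inS (fun j => (r j : ℂ)) := hE.isS _ hmem
      have hGfin : {j : ℕ | r j₀ ≤ r j}.Finite := by
        refine (finite_ge hS (show (0:ℝ) < r j₀ by linarith)).subset ?_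
        intro j hj
        simp only [Set.mem_setOf_eq] at *
        rw [hnorm j]; exact hj
      have hGne : hGfin.toFinset.Nonempty := ⟨j₀, by simp⟩
      obtain ⟨jT, hjTmem, hjTmax⟩ := hGfin.toFinset.exists_max_image r hGne
      set T : ℝ := r jT with hT
      have hTall : ∀ j, r j ≤ T := by
        intro j
        by_cases hj : r j₀ ≤ r j
        · exact hjTmax j (by simpa using hj)
        · push_neg at hj
          have : r j₀ ≤ T := by
            have : j₀ ∈ hGfin.toFinset := by simp
            exact hjTmax j₀ this
          linarith
      have htT : t < T := lt_of_lt_of_le hj₀ (hTall j₀)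
      have hTpos : 0 < T := lt_trans ht htT
      have heE : (fun j => if r j = T then (1 : ℂ) else 0) ∈ E :=
        hE.maxLevel hr0 hmem hTpos hTall
      set r' : ℕ → ℝ := fun j => if r j = T then 0 else r j with hr'
      have hmem' : (fun j => (r' j : ℂ)) ∈ E := by
        have h : (fun j => (r' j : ℂ)) =
            (fun j => (r j : ℂ)) - (T : ℂ) • (fun j => if r j = T then (1 : ℂ) else 0) := by
          funext j
          simp only [Pi.sub_apply, Pi.smul_apply, smul_eq_mul, hr']
          by_cases h : r j = T
          · simp [h]
          · simp [h]
        rw [h]; exact hE.sub hmem (hE.smul_mem _ _ heE)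
      have hr0' : ∀ j, 0 ≤ r' j := by
        intro j; rw [hr']; by_cases h : r j = T <;> simp [h, hr0 j]
      have hjTF : jT ∈ F := hsub (by simpa using htT)
      have hsub' : {j | t < r' j} ⊆ ↑(F.erase jT) := by
        intro j hj
        simp only [Set.mem_setOf_eq, hr'] at hj
        by_cases h : r j = T
        · rw [if_pos h] at hj; linarith
        · rw [if_neg h] at hj
          simp only [Finset.coe_erase, Set.mem_diff, Set.mem_singleton_iff]
          refine ⟨hsub hj, fun hcon => h ?_⟩
          rw [hcon]
      have hcard' : (F.erase jT).card ≤ N := by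
        rw [Finset.card_erase_of_mem hjTF]; omega
      have hres := ih r' hr0' hmem' t ht (F.erase jT) hsub' hcard'
      have heq : (fun j => if r' j = t then (1 : ℂ) else 0) =
          (fun j => if r j = t then (1 : ℂ) else 0) := by
        funext j
        have hiff : r' j = t ↔ r j = t := by
          rw [hr']
          by_cases h : r j = T
          · simp only [if_pos h]
            constructor
            · intro h0; exact absurd h0.symm ht.ne'
            · intro h0; rw [h0] at h; exact absurd h htT.ne
          · simp [h]
        exact if_congr hiff rfl rfl
      rw [← heq]; exact hres

lemma Good.levelNonneg (hE : Good E) {r : ℕ → ℝ} (hr0 : ∀ j, 0 ≤ r j)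
    (hmem : (fun j => (r j : ℂ)) ∈ E) {t : ℝ} (ht : 0 < t) :
    (fun j => if r j = t then (1 : ℂ) else 0) ∈ E := by
  have hnorm : ∀ j, ‖(r j : ℂ)‖ = r j := fun j => norm_real_coe (hr0 j)
  have hfin : {j : ℕ | t < r j}.Finite := by
    refine (finite_ge (hE.isS _ hmem) ht).subset ?_
    intro j hj
    simp only [Set.mem_setOf_eq] at *
    rw [hnorm j]; linarith
  exact hE.levelNonnegAux hfin.toFinset.card r hr0 hmem t ht hfin.toFinset
    (by simp) le_rfl

lemma Good.levelReal (hE : Good E) {x : ℕ → ℝ} (hmem : (fun j => (x j : ℂ)) ∈ E)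
    {t : ℝ} (ht : t ≠ 0) :
    (fun j => if x j = t then (1 : ℂ) else 0) ∈ E := by
  have hsq : (fun j => ((x j ^ 2 : ℝ) : ℂ)) ∈ E := by
    have h : (fun j => ((x j ^ 2 : ℝ) : ℂ)) =
        (fun j => (x j : ℂ)) * (fun j => (x j : ℂ)) := by
      funext j; simp only [Pi.mul_apply]; push_cast; ring
    rw [h]; exact hE.mul_mem _ hmem _ hmem
  have ht2 : (0:ℝ) < t ^ 2 := by positivity
  have he := hE.levelNonneg (fun j => sq_nonneg (x j)) hsq ht2
  set e : ℕ → ℂ := fun j => if x j ^ 2 = t ^ 2 then (1 : ℂ) else 0 with hedef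
  have hh : ((2 * t : ℝ) : ℂ)⁻¹ • (e * (fun j => (x j : ℂ)) + (t : ℂ) • e) ∈ E :=
    hE.smul_mem _ _ (hE.add_mem _ (hE.mul_mem _ he _ hmem) _ (hE.smul_mem _ _ he))
  have heq : (fun j => if x j = t then (1 : ℂ) else 0) =
      ((2 * t : ℝ) : ℂ)⁻¹ • (e * (fun j => (x j : ℂ)) + (t : ℂ) • e) := by
    funext j
    simp only [Pi.smul_apply, Pi.add_apply, Pi.mul_apply, smul_eq_mul, hedef]
    by_cases hsq' : x j ^ 2 = t ^ 2
    · rw [if_pos hsq']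
      rcases sq_eq_sq_iff_eq_or_eq_neg.mp hsq' with h | h
      · rw [if_pos h, h]
        have htC : (t : ℂ) ≠ 0 := by exact_mod_cast ht
        push_cast
        field_simp
        ring
      · have hne : x j ≠ t := by
          rw [h]; intro hcon
          apply ht; linarith [hcon]
        rw [if_neg hne, h]
        have htC : (t : ℂ) ≠ 0 := by exact_mod_cast ht
        push_cast
        field_simp
        ring
    · have hne : x j ≠ t := fun hcon => hsq' (by rw [hcon])
      rw [if_neg hsq', if_neg hne]
      simp
  rw [heq]; exact hh

lemma Good.levelC (hE : Good E) {ζ : ℕ → ℂ} (hmem : ζ ∈ E) {c : ℂ} (hc : c ≠ 0) :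
    (fun j => if ζ j = c then (1 : ℂ) else 0) ∈ E := by
  have hnsq : (fun j => ((Complex.normSq (ζ j) : ℝ) : ℂ)) ∈ E := by
    have h : (fun j => ((Complex.normSq (ζ j) : ℝ) : ℂ)) = ζ * Star.star ζ := by
      funext j
      simp only [Pi.mul_apply, Pi.star_apply, Complex.star_def, Complex.mul_conj]
    rw [h]; exact hE.mul_mem _ hmem _ (hE.star_mem _ hmem)
  have ht : 0 < Complex.normSq c := Complex.normSq_pos.mpr hc
  have he0 := hE.levelNonneg (fun j => Complex.normSq_nonneg _) hnsq ht
  set e0 : ℕ → ℂ := fun j =>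
    if Complex.normSq (ζ j) = Complex.normSq c then (1 : ℂ) else 0 with he0def
  set η : ℕ → ℂ := ζ * e0 with hηdef
  have hηE : η ∈ E := hE.mul_mem _ hmem _ he0
  set x : ℕ → ℝ := fun j => ((starRingEnd ℂ) c * η j).re with hxdef
  have hxE : (fun j => (x j : ℂ)) ∈ E := by
    have hform : (fun j => (x j : ℂ)) =
        (1 / 2 : ℂ) • (((starRingEnd ℂ) c) • η + Star.star (((starRingEnd ℂ) c) • η)) := by
      funext j
      simp only [Pi.smul_apply, Pi.add_apply, Pi.star_apply, smul_eq_mul, Complex.star_def,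
        hxdef]
      rw [Complex.add_conj]
      push_cast
      ring
    rw [hform]
    exact hE.smul_mem _ _ (hE.add_mem _ (hE.smul_mem _ _ hηE) _ (hE.star_mem _ (hE.smul_mem _ _ hηE)))
  have hwc : ((starRingEnd ℂ) c * c).re = Complex.normSq c := by
    rw [mul_comm, Complex.mul_conj]
    simp
  have hsets : ∀ j, (x j = Complex.normSq c) ↔ (ζ j = c) := by
    intro j
    constructor
    · intro hxj
      by_cases hsq : Complex.normSq (ζ j) = Complex.normSq c
      · have hηj : η j = ζ j := by
          rw [hηdef]; simp only [Pi.mul_apply, he0def, if_pos hsq, mul_one]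
        set w : ℂ := (starRingEnd ℂ) c * ζ j with hwdef
        have hwre : w.re = Complex.normSq c := by
          simp only [hxdef] at hxj
          rw [hwdef, ← hηj]; exact hxj
        have hwnsq : Complex.normSq w = (Complex.normSq c) ^ 2 := by
          rw [hwdef, Complex.normSq_mul, Complex.normSq_conj, hsq]; ring
        have him : w.im = 0 := by
          have h1 : Complex.normSq w = w.re ^ 2 + w.im ^ 2 := by
            rw [Complex.normSq_apply]; ring
          nlinarith [sq_nonneg w.im]
        have hw : w = (Complex.normSq c : ℂ) := by
          apply Complex.ext
          · rw [hwre]; simp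
          · rw [him]; simp
        have hcc : (starRingEnd ℂ) c * ζ j = (starRingEnd ℂ) c * c := by
          rw [← hwdef, hw, ← Complex.mul_conj, mul_comm]
        exact mul_left_cancel₀ (by simpa using hc) hcc
      · have hηj : η j = 0 := by
          rw [hηdef]; simp only [Pi.mul_apply, he0def, if_neg hsq, mul_zero]
        have hx0 : x j = 0 := by
          simp only [hxdef, hηj, mul_zero, Complex.zero_re]
        rw [hx0] at hxj
        exact absurd hxj.symm ht.ne'
    · intro hζj
      have hsq : Complex.normSq (ζ j) = Complex.normSq c := by rw [hζj]
      have hηj : η j = c := by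
        rw [hηdef, Pi.mul_apply, he0def]
        simp [hsq, hζj]
      simp only [hxdef, hηj]
      exact hwc
  have hxlevel := hE.levelReal hxE ht.ne'
  have heq : (fun j => if ζ j = c then (1 : ℂ) else 0) =
      (fun j => if x j = Complex.normSq c then (1 : ℂ) else 0) := by
    funext j
    exact if_congr (hsets j).symm rfl rfl
  rw [heq]
  exact hxlevel

end Stmt7
end PartThree
section PartFour
open Classical
namespace Stmt7

open Classical in
/-- indicator function of a set, as an element of `ℕ → ℂ` -/
noncomputable def ind (S : Set ℕ) : ℕ → ℂ := fun a => if a ∈ S then 1 else 0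

lemma ind_inter (S T : Set ℕ) : ind (S ∩ T) = ind S * ind T := by
  classical
  funext a
  simp only [ind, Pi.mul_apply]
  by_cases h2 : a ∈ S <;> by_cases h3 : a ∈ T <;> simp [h2, h3, Set.mem_inter_iff]

lemma ind_diff (S T : Set ℕ) : ind (S \ T) = ind S - ind S * ind T := by
  classical
  funext a
  simp only [ind, Pi.sub_apply, Pi.mul_apply]
  by_cases h2 : a ∈ S <;> by_cases h3 : a ∈ T <;> simp [h2, h3, Set.mem_diff]

def rel (E : Set (ℕ → ℂ)) (i j : ℕ) : Prop := ∀ ξ ∈ E, ξ i = ξ j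
def supp (E : Set (ℕ → ℂ)) : Set ℕ := {j | ∃ ξ ∈ E, ξ j ≠ 0}
def cls (E : Set (ℕ → ℂ)) (j : ℕ) : Set ℕ := {i | rel E i j}
noncomputable def mx (E : Set (ℕ → ℂ)) (j : ℕ) : ℕ := sSup (cls E j)
def MM (E : Set (ℕ → ℂ)) : Set ℕ := {m | m ∈ supp E ∧ ∀ i, rel E i m → i ≤ m}

variable {E : Set (ℕ → ℂ)}

lemma rel_refl (j : ℕ) : rel E j j := fun _ _ => rfl
lemma rel_symm {i j : ℕ} (h : rel E i j) : rel E j i := fun ξ hξ => (h ξ hξ).symm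
lemma rel_trans {i j k : ℕ} (h : rel E i j) (h' : rel E j k) : rel E i k :=
  fun ξ hξ => (h ξ hξ).trans (h' ξ hξ)

lemma cls_eq_of_rel {i j : ℕ} (h : rel E i j) : cls E i = cls E j := by
  ext a; exact ⟨fun ha => rel_trans ha h, fun ha => rel_trans ha (rel_symm h)⟩

lemma mem_supp_of_rel {i j : ℕ} (h : rel E i j) (hj : j ∈ supp E) : i ∈ supp E := by
  obtain ⟨ξ, hξE, hξ⟩ := hj
  exact ⟨ξ, hξE, by rw [h ξ hξE]; exact hξ⟩

lemma cls_finite (hE : Good E) {j : ℕ} (hj : j ∈ supp E) : (cls E j).Finite := by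
  obtain ⟨ξ, hξE, hξ⟩ := hj
  refine (finite_ge (hE.isS _ hξE) (norm_pos_iff.mpr hξ)).subset ?_
  intro i hi
  simp only [Set.mem_setOf_eq]
  rw [hi ξ hξE]

lemma self_mem_cls {j : ℕ} : j ∈ cls E j := rel_refl j

lemma cls_bddAbove (hE : Good E) {j : ℕ} (hj : j ∈ supp E) : BddAbove (cls E j) :=
  (cls_finite hE hj).bddAbove

lemma mx_mem_cls (hE : Good E) {j : ℕ} (hj : j ∈ supp E) : mx E j ∈ cls E j :=
  Nat.sSup_mem ⟨j, self_mem_cls⟩ (cls_bddAbove hE hj)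

lemma le_mx (hE : Good E) {i j : ℕ} (hj : j ∈ supp E) (hi : i ∈ cls E j) : i ≤ mx E j :=
  le_csSup (cls_bddAbove hE hj) hi

lemma rel_mx (hE : Good E) {j : ℕ} (hj : j ∈ supp E) : rel E j (mx E j) :=
  rel_symm (mx_mem_cls hE hj)

lemma mx_mem_MM (hE : Good E) {j : ℕ} (hj : j ∈ supp E) : mx E j ∈ MM E := by
  refine ⟨mem_supp_of_rel (mx_mem_cls hE hj) hj, fun i hi => ?_⟩
  exact le_mx hE hj (rel_trans hi (mx_mem_cls hE hj))

lemma mx_eq_self (hE : Good E) {m : ℕ} (hm : m ∈ MM E) : mx E m = m :=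
  le_antisymm (hm.2 _ (mx_mem_cls hE hm.1)) (le_mx hE hm.1 self_mem_cls)

lemma mx_eq_of_rel {i j : ℕ} (h : rel E i j) : mx E i = mx E j := by
  rw [mx, mx, cls_eq_of_rel h]

lemma MM_subset_supp : MM E ⊆ supp E := fun _ hm => hm.1

/-- The indicator of an equivalence class is in `E`. -/
lemma Good.clsInd (hE : Good E) {m : ℕ} (hm : m ∈ supp E) :
    (fun i => if rel E i m then (1 : ℂ) else 0) ∈ E := by
  obtain ⟨ζ0, hζ0E, hζ0⟩ := hm
  set F0 : Set ℕ := {i | ζ0 i = ζ0 m} with hF0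
  have he0 : ind F0 ∈ E := by
    have h := hE.levelC hζ0E hζ0
    have heq : ind F0 =
        (fun a => if ζ0 a = ζ0 m then (1 : ℂ) else 0) := by
      funext a
      exact if_congr (by simp [hF0]) rfl rfl
    rw [heq]; exact h
  have hF0fin : F0.Finite := by
    refine (finite_ge (hE.isS _ hζ0E) (norm_pos_iff.mpr hζ0)).subset ?_
    intro i hi
    simp only [hF0, Set.mem_setOf_eq] at hi
    simp only [Set.mem_setOf_eq, hi, le_refl]
  have claim : ∀ H : Finset ℕ, (∀ i ∈ H, ¬ rel E i m) → ∃ B : Set ℕ,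
      ind B ∈ E ∧ B ⊆ F0 ∧
      (∀ a, rel E a m → a ∈ B) ∧ ∀ i ∈ H, i ∉ B := by
    intro H
    induction H using Finset.induction_on with
    | empty =>
        intro _
        refine ⟨F0, he0, subset_rfl, fun a ha => ?_, by simp⟩
        simp only [hF0, Set.mem_setOf_eq]
        exact ha ζ0 hζ0E
    | @insert i H hiH ih =>
        intro hall
        have hi : ¬ rel E i m := hall i (Finset.mem_insert_self i H)
        obtain ⟨B, hBE, hBF0, hBcls, hBout⟩ := ih fun a ha =>
          hall a (Finset.mem_insert_of_mem ha)
        by_cases hiB : i ∈ B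
        · -- need to cut i out
          have hsep : ∃ A : Set ℕ, ind A ∈ E ∧
              (∀ a, rel E a m → a ∈ A) ∧ i ∉ A := by
            rw [rel] at hi
            push_neg at hi
            obtain ⟨ξ, hξE, hξne⟩ := hi
            by_cases hc : ξ m ≠ 0
            · refine ⟨{a | ξ a = ξ m}, ?_, fun a ha => ha ξ hξE, hξne⟩
              have h := hE.levelC hξE hc
              have heq : ind {a | ξ a = ξ m} =
                  (fun a => if ξ a = ξ m then (1 : ℂ) else 0) := by
                funext a; exact if_congr (by simp [ind]) rfl rfl
              rw [heq]; exact h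
            · push_neg at hc
              have hξi : ξ i ≠ 0 := by rw [hc] at hξne; exact hξne
              refine ⟨F0 \ {a | ξ a = ξ i}, ?_, fun a ha => ?_, ?_⟩
              · have h1 := hE.levelC hξE hξi
                have heq2 : ind {a | ξ a = ξ i} =
                    (fun a => if ξ a = ξ i then (1 : ℂ) else 0) := by
                  funext a; exact if_congr (by simp [ind]) rfl rfl
                rw [ind_diff, heq2]
                exact hE.sub he0 (hE.mul_mem _ he0 _ h1)
              · constructor
                · simp only [hF0, Set.mem_setOf_eq]; exact ha ζ0 hζ0E
                · simp only [Set.mem_setOf_eq]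
                  rw [ha ξ hξE, hc]
                  exact fun h => hξi h.symm
              · intro hcon
                exact hcon.2 (by simp)
          obtain ⟨A, hAE, hAcls, hAi⟩ := hsep
          refine ⟨B ∩ A, ?_, fun a ha => hBF0 ha.1, fun a ha => ⟨hBcls a ha, hAcls a ha⟩, ?_⟩
          · rw [ind_inter]
            exact hE.mul_mem _ hBE _ hAE
          · intro a ha
            rcases Finset.mem_insert.mp ha with h | h
            · rw [h]; exact fun hcon => hAi hcon.2
            · exact fun hcon => hBout a h hcon.1
        · exact ⟨B, hBE, hBF0, hBcls, fun a ha => by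
            rcases Finset.mem_insert.mp ha with h | h
            · rw [h]; exact hiB
            · exact hBout a h⟩
  set G : Finset ℕ := hF0fin.toFinset.filter (fun i => ¬ rel E i m) with hG
  obtain ⟨B, hBE, hBF0, hBcls, hBout⟩ := claim G (fun i hiG => (Finset.mem_filter.mp hiG).2)
  have hBeq : ∀ a, a ∈ B ↔ rel E a m := by
    intro a
    constructor
    · intro ha
      by_contra hcon
      refine hBout a ?_ ha
      rw [hG, Finset.mem_filter, Set.Finite.mem_toFinset]
      exact ⟨hBF0 ha, hcon⟩
    · exact hBcls a
  have heq : (fun i => if rel E i m then (1 : ℂ) else 0) =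
      ind B := by
    funext a; exact if_congr (hBeq a).symm rfl rfl
  rw [heq]; exact hBE

end Stmt7
end PartFour
section PartFive
open Classical
namespace Stmt7
variable {E : Set (ℕ → ℂ)}

lemma Good.clsInd' (hE : Good E) {m : ℕ} (hm : m ∈ supp E) : ind (cls E m) ∈ E := by
  have h := hE.clsInd hm
  have heq : ind (cls E m) = (fun i => if rel E i m then (1 : ℂ) else 0) := by
    funext a
    exact if_congr Iff.rfl rfl rfl
  rw [heq]; exact h

lemma summable_g : Summable (fun j : ℕ => ((((j : ℝ) + 1) ^ 4)⁻¹)) := by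
  have h0 : Summable (fun n : ℕ => 1 / (n : ℝ) ^ 4) :=
    Real.summable_one_div_nat_pow.mpr (by norm_num)
  have h1 := (summable_nat_add_iff 1).mpr h0
  refine h1.congr fun j => ?_
  push_cast
  rw [one_div]

lemma g_nonneg (j : ℕ) : (0:ℝ) ≤ (((j : ℝ) + 1) ^ 4)⁻¹ := by positivity

lemma bound_aux {a K : ℝ} (ha : 0 ≤ a) {j m p : ℕ} (hjm : j ≤ m)
    (h : a * ((m : ℝ) + 1) ^ (p + 2) ≤ K) :
    a ^ 2 * ((j : ℝ) + 1) ^ (2 * p) ≤ K ^ 2 * ((((j : ℝ) + 1) ^ 4)⁻¹) := by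
  have hj0 : (0:ℝ) ≤ (j : ℝ) := Nat.cast_nonneg j
  have hxy : ((j : ℝ) + 1) ≤ ((m : ℝ) + 1) := by
    have : (j : ℝ) ≤ (m : ℝ) := Nat.cast_le.mpr hjm
    linarith
  have h1 : a * ((j : ℝ) + 1) ^ (p + 2) ≤ K := by
    refine le_trans ?_ h
    exact mul_le_mul_of_nonneg_left (pow_le_pow_left₀ (by linarith) hxy _) ha
  have h0 : (0:ℝ) ≤ a * ((j : ℝ) + 1) ^ (p + 2) := by positivity
  have h2 : (a * ((j : ℝ) + 1) ^ (p + 2)) ^ 2 ≤ K ^ 2 := by nlinarith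
  have h3 : a ^ 2 * ((j : ℝ) + 1) ^ (2 * p) * (((j : ℝ) + 1) ^ 4) =
      (a * ((j : ℝ) + 1) ^ (p + 2)) ^ 2 := by ring
  have hx4 : (0:ℝ) < ((j : ℝ) + 1) ^ 4 := by positivity
  rw [← h3] at h2
  calc a ^ 2 * ((j : ℝ) + 1) ^ (2 * p)
      = a ^ 2 * ((j : ℝ) + 1) ^ (2 * p) * (((j : ℝ) + 1) ^ 4) * ((((j : ℝ) + 1) ^ 4)⁻¹) := by
        field_simp
    _ ≤ K ^ 2 * ((((j : ℝ) + 1) ^ 4)⁻¹) :=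
        mul_le_mul_of_nonneg_right h2 (inv_nonneg.mpr hx4.le)

lemma supp_infinite (hinfdim : ¬ ∃ t : Finset (ℕ → ℂ),
      E ⊆ (Submodule.span ℂ (t : Set (ℕ → ℂ)) : Set (ℕ → ℂ))) :
    (supp E).Infinite := by
  by_contra h
  rw [Set.not_infinite] at h
  apply hinfdim
  refine ⟨h.toFinset.image (fun j => (Pi.single j (1 : ℂ) : ℕ → ℂ)), ?_⟩
  intro ξ hξ
  have hrepr : ξ = ∑ j ∈ h.toFinset, ξ j • (Pi.single j (1 : ℂ) : ℕ → ℂ) := by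
    funext i
    rw [Finset.sum_apply]
    simp only [Pi.smul_apply, Pi.single_apply, smul_eq_mul, mul_ite, mul_one, mul_zero]
    rw [Finset.sum_ite_eq]
    by_cases hi : i ∈ h.toFinset
    · simp [hi]
    · have hi' : ξ i = 0 := by
        by_contra hne
        exact hi (by rw [Set.Finite.mem_toFinset]; exact ⟨ξ, hξ, hne⟩)
      simp [hi, hi']
  rw [hrepr]
  apply Submodule.sum_mem
  intro j hj
  refine Submodule.smul_mem _ _ (Submodule.subset_span ?_)
  simp only [Finset.coe_image, Set.mem_image, Finset.mem_coe]
  exact ⟨j, hj, rfl⟩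

end Stmt7
end PartFive
section PartSix
open Classical
namespace Stmt7
variable {E : Set (ℕ → ℂ)}

noncomputable def nthM (E : Set (ℕ → ℂ)) : ℕ → ℕ := Nat.nth (fun m => m ∈ MM E)

open Classical in
noncomputable def cntM (E : Set (ℕ → ℂ)) (m : ℕ) : ℕ := Nat.count (fun m => m ∈ MM E) m

noncomputable def Phi (E : Set (ℕ → ℂ)) (ξ : ℕ → ℂ) : ℕ → ℂ := fun k => ξ (nthM E k)

open Classical in
noncomputable def build (E : Set (ℕ → ℂ)) (c : ℕ → ℂ) : ℕ → ℂ :=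
  fun j => if j ∈ supp E then c (cntM E (mx E j)) else 0

lemma nth_mem (hinf : (MM E).Infinite) (k : ℕ) : nthM E k ∈ MM E :=
  Nat.nth_mem_of_infinite hinf k

lemma nth_mono (hinf : (MM E).Infinite) : StrictMono (nthM E) := Nat.nth_strictMono hinf

open Classical in
lemma nth_cnt {m : ℕ} (hm : m ∈ MM E) : nthM E (cntM E m) = m := Nat.nth_count hm

lemma cnt_nth (hinf : (MM E).Infinite) (k : ℕ) : cntM E (nthM E k) = k :=
  (nth_mono hinf).injective (by rw [nth_cnt (nth_mem hinf k)])

lemma MM_infinite (hE : Good E) (hsupp : (supp E).Infinite) : (MM E).Infinite := by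
  by_contra h
  rw [Set.not_infinite] at h
  apply hsupp
  refine Set.Finite.subset (h.biUnion fun m hm => cls_finite hE hm.1) ?_
  intro j hj
  simp only [Set.mem_iUnion, exists_prop]
  exact ⟨mx E j, mx_mem_MM hE hj, rel_mx hE hj⟩

set_option maxHeartbeats 1000000 in
lemma Good.build_spec (hE : Good E) (hinf : (MM E).Infinite) (h0 : (0 : ℕ → ℂ) ∈ E)
    {c : ℕ → ℂ} (hc : c ∈ lambdaN (fun k => nthM E k + 1)) :
    build E c ∈ E ∧ Phi E (build E c) = c := by
  choose C hC using hc
  have hkey : ∀ q j, ‖build E c j‖ ^ 2 * ((j : ℝ) + 1) ^ (2 * q) ≤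
      (C (q + 2)) ^ 2 * ((((j : ℝ) + 1) ^ 4)⁻¹) := by
    intro q j
    by_cases hjs : j ∈ supp E
    · have hbuild : build E c j = c (cntM E (mx E j)) := by
        simp only [build, if_pos hjs]
      have hnthk0 : nthM E (cntM E (mx E j)) = mx E j := nth_cnt (mx_mem_MM hE hjs)
      have hb : ‖c (cntM E (mx E j))‖ *
          ((nthM E (cntM E (mx E j)) + 1 : ℕ) : ℝ) ^ (q + 2) ≤ C (q + 2) := hC (q + 2) _
      rw [hnthk0] at hb
      have hb' : ‖c (cntM E (mx E j))‖ * ((mx E j : ℝ) + 1) ^ (q + 2) ≤ C (q + 2) := by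
        push_cast at hb
        exact hb
      rw [hbuild]
      exact bound_aux (norm_nonneg _) (le_mx hE hjs self_mem_cls) hb'
    · have hb0 : build E c j = 0 := by simp only [build, if_neg hjs]
      rw [hb0]
      have hzz : ‖(0:ℂ)‖ ^ 2 * ((j : ℝ) + 1) ^ (2 * q) = 0 := by simp
      rw [hzz]
      positivity
  have hbuildS : inS (build E c) := fun q =>
    Summable.of_nonneg_of_le (term_nonneg _ _) (fun j => hkey q j)
      (summable_g.mul_left _)
  have hpart : ∀ L : ℕ,
      (fun j => if j ∈ supp E ∧ mx E j < nthM E L then build E c j else 0) ∈ E := by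
    intro L
    induction L with
    | zero =>
        have h0' : (fun j => if j ∈ supp E ∧ mx E j < nthM E 0 then build E c j else 0)
            = (0 : ℕ → ℂ) := by
          funext j
          rw [if_neg, Pi.zero_apply]
          rintro ⟨hjs, hlt⟩
          have hmem : mx E j ∈ MM E := mx_mem_MM hE hjs
          have hle : nthM E 0 ≤ mx E j := by
            rw [nthM, Nat.nth_zero]
            exact Nat.sInf_le hmem
          omega
        rw [h0']; exact h0
    | succ L ih =>
        have hLmem : nthM E L ∈ MM E := nth_mem hinf L
        have hLL : nthM E L < nthM E (L + 1) := nth_mono hinf (Nat.lt_succ_self L)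
        have hrelcase : ∀ j, rel E j (nthM E L) → (j ∈ supp E ∧ mx E j = nthM E L) := by
          intro j hr
          have hjs : j ∈ supp E := mem_supp_of_rel hr (MM_subset_supp hLmem)
          exact ⟨hjs, by rw [mx_eq_of_rel hr, mx_eq_self hE hLmem]⟩
        have hstep : (fun j => if j ∈ supp E ∧ mx E j < nthM E (L + 1) then build E c j else 0)
            = (fun j => if j ∈ supp E ∧ mx E j < nthM E L then build E c j else 0)
              + c L • (fun i => if rel E i (nthM E L) then (1 : ℂ) else 0) := by
          funext j
          simp only [Pi.add_apply, Pi.smul_apply, smul_eq_mul]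
          by_cases hjs : j ∈ supp E
          · have hmxMMj : mx E j ∈ MM E := mx_mem_MM hE hjs
            by_cases hlt : mx E j < nthM E L
            · rw [if_pos ⟨hjs, lt_trans hlt hLL⟩, if_pos ⟨hjs, hlt⟩, if_neg, mul_zero,
                add_zero]
              intro hr
              have := (hrelcase j hr).2
              omega
            · push_neg at hlt
              by_cases hlt2 : mx E j < nthM E (L + 1)
              · have hcnt : cntM E (mx E j) = L := by
                  have h1 : nthM E (cntM E (mx E j)) = mx E j := nth_cnt hmxMMj
                  have h2 : ¬ cntM E (mx E j) < L := by
                    intro hcon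
                    have := nth_mono hinf hcon
                    omega
                  have h3 : cntM E (mx E j) < L + 1 := by
                    by_contra hcon
                    push_neg at hcon
                    have := (nth_mono hinf).monotone hcon
                    omega
                  omega
                have hmxL : mx E j = nthM E L := by
                  rw [← nth_cnt hmxMMj, hcnt]
                rw [if_pos ⟨hjs, hlt2⟩, if_neg (fun hh => absurd hh.2 (by omega)),
                  if_pos (show rel E j (nthM E L) from hmxL ▸ rel_mx hE hjs), mul_one,
                  zero_add]
                simp only [build, if_pos hjs, hcnt]
              · push_neg at hlt2
                rw [if_neg (fun hh => absurd hh.2 (by omega)),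
                  if_neg (fun hh => absurd hh.2 (by omega)), if_neg, mul_zero, add_zero]
                intro hr
                have := (hrelcase j hr).2
                omega
          · rw [if_neg (fun hh => hjs hh.1), if_neg (fun hh => hjs hh.1),
              if_neg (fun hr => hjs (hrelcase j hr).1), mul_zero, add_zero]
        rw [hstep]
        exact hE.add_mem _ ih _ (hE.smul_mem _ _ (hE.clsInd (MM_subset_supp hLmem)))
  have hbuildE : build E c ∈ E := by
    refine hE.closed_mem _ hbuildS ?_
    intro q ε hε
    set D := (C (q + 2)) ^ 2 with hD
    have hD0 : (0:ℝ) ≤ D := sq_nonneg _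
    have htail := tendsto_sum_nat_add (fun j : ℕ => D * ((((j : ℝ) + 1) ^ 4)⁻¹))
    obtain ⟨J, hJ⟩ := (htail.eventually_lt_const (show (0:ℝ) < ε ^ 2 by positivity)).exists
    set B := (Finset.range J).sup (fun j => mx E j) with hB
    have hnthK : B < nthM E (B + 1) :=
      lt_of_lt_of_le (Nat.lt_succ_self B) (nth_mono hinf).le_apply
    set η : ℕ → ℂ := fun j => if j ∈ supp E ∧ mx E j < nthM E (B + 1) then build E c j else 0
      with hη
    refine ⟨η, hpart (B + 1), ?_⟩
    have hdz : ∀ j < J, (build E c - η) j = 0 := by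
      intro j hj
      simp only [Pi.sub_apply, hη]
      by_cases hjs : j ∈ supp E
      · have hle : mx E j ≤ B := Finset.le_sup (Finset.mem_range.mpr hj)
        rw [if_pos ⟨hjs, by omega⟩, sub_self]
      · rw [if_neg (fun hh => hjs hh.1), sub_zero]
        simp only [build, if_neg hjs]
    have hterm : ∀ j, ‖(build E c - η) j‖ ^ 2 * ((j : ℝ) + 1) ^ (2 * q) ≤
        D * ((((j : ℝ) + 1) ^ 4)⁻¹) := by
      intro j
      simp only [Pi.sub_apply, hη]
      by_cases hc2 : j ∈ supp E ∧ mx E j < nthM E (B + 1)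
      · rw [if_pos hc2, sub_self]
        have hzz : ‖(0:ℂ)‖ ^ 2 * ((j : ℝ) + 1) ^ (2 * q) = 0 := by simp
        rw [hzz]
        positivity
      · rw [if_neg hc2, sub_zero]
        exact hkey q j
    have hsum_diff : Summable (fun j => ‖(build E c - η) j‖ ^ 2 * ((j : ℝ) + 1) ^ (2 * q)) :=
      Summable.of_nonneg_of_le (term_nonneg _ _) hterm (summable_g.mul_left D)
    have hsplit := hsum_diff.sum_add_tsum_nat_add J
    have hzero_sum : ∑ i ∈ Finset.range J, ‖(build E c - η) i‖ ^ 2 * ((i : ℝ) + 1) ^ (2 * q)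
        = 0 := by
      refine Finset.sum_eq_zero fun i hi => ?_
      rw [hdz i (Finset.mem_range.mp hi)]
      simp
    have htail_le : (∑' i : ℕ, ‖(build E c - η) (i + J)‖ ^ 2 * (((i + J : ℕ) : ℝ) + 1) ^ (2 * q))
        ≤ ∑' i : ℕ, D * (((((i + J : ℕ) : ℝ) + 1) ^ 4)⁻¹) :=
      Summable.tsum_le_tsum (fun i => hterm (i + J)) ((summable_nat_add_iff J).mpr hsum_diff)
        ((summable_nat_add_iff J).mpr (summable_g.mul_left D))
    have htotal : (∑' j : ℕ, ‖(build E c - η) j‖ ^ 2 * ((j : ℝ) + 1) ^ (2 * q)) < ε ^ 2 := by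
      rw [← hsplit, hzero_sum, zero_add]
      exact lt_of_le_of_lt htail_le hJ
    rw [sNorm]
    exact (Real.sqrt_lt' hε).mpr htotal
  refine ⟨hbuildE, ?_⟩
  funext k
  have hkMM : nthM E k ∈ MM E := nth_mem hinf k
  show build E c (nthM E k) = c k
  simp only [build]
  rw [if_pos (MM_subset_supp hkMM), mx_eq_self hE hkMM, cnt_nth hinf k]

lemma Good.est2 (hE : Good E) (hinf : (MM E).Infinite) (p' : ℕ) {ξ : ℕ → ℂ} (hξ : ξ ∈ E) :
    sNorm p' ξ ≤ Real.sqrt (∑' j : ℕ, ((((j : ℝ) + 1) ^ 4)⁻¹)) *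
      kNorm (fun k => nthM E k + 1) (p' + 2) (Phi E ξ) := by
  set n : ℕ → ℕ := fun k => nthM E k + 1 with hn
  have hfub : ∀ k, ‖Phi E ξ k‖ * ((n k : ℕ) : ℝ) ^ (p' + 2) ≤ sNorm (p' + 2) ξ := by
    intro k
    have h := le_sNorm (hE.isS _ hξ) (p' + 2) (nthM E k)
    have hcast : ((n k : ℕ) : ℝ) = (nthM E k : ℝ) + 1 := by
      rw [hn]; push_cast; ring
    rw [hcast]
    exact h
  have hbdd : BddAbove (Set.range fun k => ‖Phi E ξ k‖ * ((n k : ℕ) : ℝ) ^ (p' + 2)) := by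
    refine ⟨sNorm (p' + 2) ξ, ?_⟩
    rintro x ⟨k, rfl⟩
    exact hfub k
  set K := kNorm n (p' + 2) (Phi E ξ) with hK
  have hKb : ∀ k, ‖Phi E ξ k‖ * ((n k : ℕ) : ℝ) ^ (p' + 2) ≤ K := fun k => le_ciSup hbdd k
  have hK0 : 0 ≤ K := le_trans (by positivity) (hKb 0)
  have hpt : ∀ j, ‖ξ j‖ ^ 2 * ((j : ℝ) + 1) ^ (2 * p') ≤ K ^ 2 * ((((j : ℝ) + 1) ^ 4)⁻¹) := by
    intro j
    by_cases hjs : j ∈ supp E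
    · have hnthk0 : nthM E (cntM E (mx E j)) = mx E j := nth_cnt (mx_mem_MM hE hjs)
      have heq1 : Phi E ξ (cntM E (mx E j)) = ξ j := by
        show ξ (nthM E (cntM E (mx E j))) = ξ j
        rw [hnthk0]
        exact ((rel_mx hE hjs) ξ hξ).symm
      have heq2 : ((n (cntM E (mx E j)) : ℕ) : ℝ) = (mx E j : ℝ) + 1 := by
        show (((nthM E (cntM E (mx E j)) + 1 : ℕ)) : ℝ) = _
        rw [hnthk0]
        push_cast
        ring
      have hb' : ‖ξ j‖ * ((mx E j : ℝ) + 1) ^ (p' + 2) ≤ K := by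
        have hb := hKb (cntM E (mx E j))
        rw [heq1, heq2] at hb
        exact hb
      exact bound_aux (norm_nonneg _) (le_mx hE hjs self_mem_cls) hb'
    · have hz : ξ j = 0 := by
        by_contra hne
        exact hjs ⟨ξ, hξ, hne⟩
      rw [hz]
      have hzz : ‖(0:ℂ)‖ ^ 2 * ((j : ℝ) + 1) ^ (2 * p') = 0 := by simp
      rw [hzz]
      positivity
  have hle := Summable.tsum_le_tsum hpt (hE.isS _ hξ p') (summable_g.mul_left (K ^ 2))
  rw [tsum_mul_left] at hle
  rw [sNorm]
  calc Real.sqrt (∑' j : ℕ, ‖ξ j‖ ^ 2 * ((j : ℝ) + 1) ^ (2 * p'))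
      ≤ Real.sqrt (K ^ 2 * ∑' j : ℕ, ((((j : ℝ) + 1) ^ 4)⁻¹)) := Real.sqrt_le_sqrt hle
    _ = K * Real.sqrt (∑' j : ℕ, ((((j : ℝ) + 1) ^ 4)⁻¹)) := by
        rw [Real.sqrt_mul (sq_nonneg K), Real.sqrt_sq hK0]
    _ = _ := mul_comm _ _

end Stmt7
end PartSix

set_option maxHeartbeats 1000000 in
/-- Every infinite-dimensional closed *-subalgebra `E` of `s` is isomorphic as a
topological *-algebra to `λ^∞(n_k^q)` for some strictly increasing sequence `(n_k)` of
(positive) natural numbers: there is a bijection `Φ` of `E` onto `λ^∞(n_k^q)` which is a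
`ℂ`-algebra homomorphism preserving conjugation, continuous with continuous inverse
(expressed by mutual seminorm estimates). -/
theorem stmt_7 (E : Set (ℕ → ℂ))
    (hEsub : ∀ ξ ∈ E, inS ξ)
    (hadd : ∀ ξ ∈ E, ∀ η ∈ E, ξ + η ∈ E)
    (hsmul : ∀ (c : ℂ), ∀ ξ ∈ E, c • ξ ∈ E)
    (hmul : ∀ ξ ∈ E, ∀ η ∈ E, ξ * η ∈ E)
    (hstar : ∀ ξ ∈ E, star ξ ∈ E)
    (hclosed : ∀ ξ : ℕ → ℂ, inS ξ →
      (∀ q : ℕ, ∀ ε : ℝ, 0 < ε → ∃ η ∈ E, sNorm q (ξ - η) < ε) → ξ ∈ E)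
    (hinfdim : ¬ ∃ t : Finset (ℕ → ℂ),
      E ⊆ (Submodule.span ℂ (t : Set (ℕ → ℂ)) : Set (ℕ → ℂ))) :
    ∃ n : ℕ → ℕ, StrictMono n ∧ (∀ k, 0 < n k) ∧
      ∃ Φ : (ℕ → ℂ) → (ℕ → ℂ),
        Set.BijOn Φ E (lambdaN n) ∧
        (∀ ξ ∈ E, ∀ η ∈ E, Φ (ξ + η) = Φ ξ + Φ η) ∧
        (∀ (c : ℂ), ∀ ξ ∈ E, Φ (c • ξ) = c • Φ ξ) ∧
        (∀ ξ ∈ E, ∀ η ∈ E, Φ (ξ * η) = Φ ξ * Φ η) ∧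
        (∀ ξ ∈ E, Φ (star ξ) = star (Φ ξ)) ∧
        (∀ q : ℕ, ∃ p : ℕ, ∃ C : ℝ, 0 < C ∧ ∀ ξ ∈ E, kNorm n q (Φ ξ) ≤ C * sNorm p ξ) ∧
        (∀ p : ℕ, ∃ q : ℕ, ∃ C : ℝ, 0 < C ∧ ∀ ξ ∈ E, sNorm p ξ ≤ C * kNorm n q (Φ ξ)) := by
  classical
  have hE : Stmt7.Good E := ⟨hEsub, hadd, hsmul, hmul, hstar, hclosed⟩
  have hEne : E.Nonempty := by
    rcases Set.eq_empty_or_nonempty E with h | h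
    · exact absurd ⟨∅, by simp [h]⟩ hinfdim
    · exact h
  obtain ⟨ξ₀, hξ₀⟩ := hEne
  have h0 : (0 : ℕ → ℂ) ∈ E := by
    have h := hsmul 0 ξ₀ hξ₀
    simpa using h
  have hsuppinf : (Stmt7.supp E).Infinite := Stmt7.supp_infinite hinfdim
  have hinf : (Stmt7.MM E).Infinite := Stmt7.MM_infinite hE hsuppinf
  have hbnd : ∀ ξ ∈ E, ∀ q k, ‖Stmt7.Phi E ξ k‖ *
      (((Stmt7.nthM E k + 1 : ℕ)) : ℝ) ^ q ≤ sNorm q ξ := by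
    intro ξ hξ q k
    have h := Stmt7.le_sNorm (hEsub ξ hξ) q (Stmt7.nthM E k)
    have hcast : (((Stmt7.nthM E k + 1 : ℕ)) : ℝ) = (Stmt7.nthM E k : ℝ) + 1 := by
      push_cast; ring
    rw [hcast]
    exact h
  refine ⟨fun k => Stmt7.nthM E k + 1, ?_, fun k => Nat.succ_pos _, Stmt7.Phi E,
    ⟨?_, ?_, ?_⟩, ?_, ?_, ?_, ?_, ?_, ?_⟩
  · intro a b hab
    exact Nat.succ_lt_succ (Stmt7.nth_mono hinf hab)
  · -- MapsTo
    intro ξ hξ q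
    exact ⟨sNorm q ξ, fun k => hbnd ξ hξ q k⟩
  · -- InjOn
    intro ξ hξ η hη hfeq
    funext j
    by_cases hjs : j ∈ Stmt7.supp E
    · have hmxM := Stmt7.mx_mem_MM hE hjs
      have h1 : ξ j = ξ (Stmt7.nthM E (Stmt7.cntM E (Stmt7.mx E j))) := by
        rw [Stmt7.nth_cnt hmxM]
        exact (Stmt7.rel_mx hE hjs) ξ hξ
      have h2 : η j = η (Stmt7.nthM E (Stmt7.cntM E (Stmt7.mx E j))) := by
        rw [Stmt7.nth_cnt hmxM]
        exact (Stmt7.rel_mx hE hjs) η hη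
      rw [h1, h2]
      exact congrFun hfeq (Stmt7.cntM E (Stmt7.mx E j))
    · have hz1 : ξ j = 0 := by by_contra hne; exact hjs ⟨ξ, hξ, hne⟩
      have hz2 : η j = 0 := by by_contra hne; exact hjs ⟨η, hη, hne⟩
      rw [hz1, hz2]
  · -- SurjOn
    intro c hc
    obtain ⟨hmem, hphi⟩ := Stmt7.Good.build_spec hE hinf h0 hc
    exact ⟨Stmt7.build E c, hmem, hphi⟩
  · intro ξ _ η _; funext k; rfl
  · intro c ξ _; funext k; rfl
  · intro ξ _ η _; funext k; rfl
  · intro ξ _; funext k; rfl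
  · -- estimate 1
    intro q
    refine ⟨q, 1, one_pos, fun ξ hξ => ?_⟩
    rw [one_mul]
    exact ciSup_le fun k => hbnd ξ hξ q k
  · -- estimate 2
    intro p'
    have htsum1 : (1 : ℝ) ≤ ∑' j : ℕ, ((((j : ℝ) + 1) ^ 4)⁻¹) := by
      have h := Summable.le_tsum Stmt7.summable_g 0 (fun i _ => Stmt7.g_nonneg i)
      simpa using h
    refine ⟨p' + 2, Real.sqrt (∑' j : ℕ, ((((j : ℝ) + 1) ^ 4)⁻¹)),
      Real.sqrt_pos.mpr (by linarith), fun ξ hξ => ?_⟩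
    exact Stmt7.Good.est2 hE hinf p' hξ

end
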